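/- Let d and k be positive integers and let G be a graph containing a family F of more than d·(d!)·(k−1)^d distinct induced odd cycles, each of length at most d. Then G has a minimal odd cycle transversal of size at least k. -/

import Mathlib

open SimpleGraph

/-- `Z` is an odd cycle transversal: `G − Z` is bipartite. -/
def IsOCT {V : Type*} (G : SimpleGraph V) (Z : Set V) : Prop :=
  (G.induce Zᶜ).Colorable 2

private lemma walk_parity {V : Type*} {G : SimpleGraph V} {a b : V} (p : G.Walk a b)
    (f : V → ZMod 2) (hf : ∀ x y, s(x, y) ∈ p.edges → f x ≠ f y) :
    f b = f a + p.length := by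
  induction p with
  | nil => simp
  | @cons u w b h q ih =>
    have h1 : f u ≠ f w := hf u w (by simp)
    have h2 : f b = f w + q.length := ih (fun x y hxy => hf x y (by simp [hxy]))
    have h3 : f w = f u + 1 :=
      (by decide : ∀ a b : ZMod 2, a ≠ b → b = a + 1) (f u) (f w) h1
    rw [h2, h3]
    push_cast [SimpleGraph.Walk.length_cons]
    ring

private lemma oct_avoid_odd_cycle {V : Type*} {G : SimpleGraph V} {Z : Set V}
    (hZ : IsOCT G Z) {u : V} (c : G.Walk u u) (hodd : Odd c.length)
    (hdisj : ∀ x ∈ c.support, x ∉ Z) : False := by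
  obtain ⟨C⟩ := hZ
  classical
  set f : V → ZMod 2 := fun x => if h : x ∈ Zᶜ then ((C ⟨x, h⟩ : Fin 2) : ℕ) else 0 with hf
  have key : ∀ x y, s(x, y) ∈ c.edges → f x ≠ f y := by
    intro x y hxy
    have hx : x ∈ Zᶜ := hdisj x (c.fst_mem_support_of_mem_edges hxy)
    have hy : y ∈ Zᶜ := hdisj y (c.snd_mem_support_of_mem_edges hxy)
    have hadj : (G.induce Zᶜ).Adj ⟨x, hx⟩ ⟨y, hy⟩ := c.adj_of_mem_edges hxy
    have hne := C.valid hadj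
    simp only [hf, dif_pos hx, dif_pos hy]
    revert hne
    generalize C ⟨x, hx⟩ = a; generalize C ⟨y, hy⟩ = b
    revert a b; decide
  have := walk_parity c f key
  have hlen : (c.length : ZMod 2) = 0 := (left_eq_add.mp this)
  obtain ⟨m, hm⟩ := hodd
  rw [hm] at hlen
  push_cast at hlen
  rw [(by decide : (2 : ZMod 2) = 0)] at hlen
  simp at hlen

/-- A closed walk is an induced (chordless) cycle. -/
def IsInducedCycle {V : Type*} (G : SimpleGraph V) {u : V} (c : G.Walk u u) : Prop :=
  c.IsCycle ∧ ∀ x y, x ∈ c.support → y ∈ c.support → G.Adj x y → c.toSubgraph.Adj x y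

private lemma cycle_support_card {V : Type*} [DecidableEq V] {G : SimpleGraph V} {u : V}
    {c : G.Walk u u} (hc : c.IsCycle) : c.support.toFinset.card = c.length := by
  have h3 := hc.three_le_length
  have hlt : c.support.tail.length = c.length := by
    have := c.length_support
    rw [c.support_eq_cons] at this
    simpa using this
  have htne : c.support.tail ≠ [] := by
    intro h; rw [h] at hlt; simp at hlt; omega
  have hnil : ¬ c.Nil := by
    rw [SimpleGraph.Walk.not_nil_iff_lt_length]; omega
  have hu : u ∈ c.support.tail := by
    have hm : u ∈ c.tail.support := SimpleGraph.Walk.end_mem_support _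
    rwa [SimpleGraph.Walk.support_tail_of_not_nil c hnil] at hm
  have h1 : c.support.toFinset = c.support.tail.toFinset := by
    conv_lhs => rw [c.support_eq_cons]
    rw [List.toFinset_cons, Finset.insert_eq_self.mpr (List.mem_toFinset.mpr hu)]
  rw [h1, List.toFinset_card_of_nodup hc.support_nodup, hlt]

private lemma indexOf_edges {V : Type*} [DecidableEq V] {G : SimpleGraph V} :
    ∀ {a b : V} (p : G.Walk a b), p.support.Nodup → ∀ x y, s(x, y) ∈ p.edges →
      p.support.idxOf y = p.support.idxOf x + 1 ∨
      p.support.idxOf x = p.support.idxOf y + 1 := by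
  intro a b p
  induction p with
  | nil => intro _ x y h; simp at h
  | @cons a w b h q ih =>
    intro hnd x y hxy
    rw [SimpleGraph.Walk.support_cons, List.nodup_cons] at hnd
    obtain ⟨ha, hq⟩ := hnd
    have hw0 : q.support.idxOf w = 0 := by
      rw [q.support_eq_cons]; exact List.idxOf_cons_self
    have hwa : w ≠ a := by
      intro h'; exact ha (h' ▸ q.start_mem_support)
    rw [SimpleGraph.Walk.edges_cons, List.mem_cons] at hxy
    rcases hxy with heq | hmem
    · rw [Sym2.eq_iff] at heq
      rcases heq with ⟨rfl, rfl⟩ | ⟨rfl, rfl⟩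
      · left
        rw [SimpleGraph.Walk.support_cons, List.idxOf_cons_self,
          List.idxOf_cons_ne _ (Ne.symm hwa), hw0]
      · right
        rw [SimpleGraph.Walk.support_cons, List.idxOf_cons_self,
          List.idxOf_cons_ne _ (Ne.symm hwa), hw0]
    · have hx : x ∈ q.support := q.fst_mem_support_of_mem_edges hmem
      have hy : y ∈ q.support := q.snd_mem_support_of_mem_edges hmem
      have hxa : x ≠ a := fun h' => ha (h' ▸ hx)
      have hya : y ≠ a := fun h' => ha (h' ▸ hy)
      rw [SimpleGraph.Walk.support_cons, List.idxOf_cons_ne _ (Ne.symm hxa),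
        List.idxOf_cons_ne _ (Ne.symm hya)]
      rcases ih hq x y hmem with h' | h'
      · left; omega
      · right; omega

private lemma induced_cycle_colorable {V : Type*} [DecidableEq V] {G : SimpleGraph V}
    {u : V} {c : G.Walk u u} (hc : IsInducedCycle G c) {Y : Set V} {v : V}
    (hv : v ∈ c.support) (hvY : v ∉ Y) (hY : ∀ y ∈ Y, y ∈ c.support) :
    (G.induce Y).Colorable 2 := by
  have hc' : (c.rotate v hv).IsCycle := hc.1.rotate hv
  have hne : ¬ (c.rotate v hv).Nil := by
    rw [SimpleGraph.Walk.not_nil_iff_lt_length]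
    have := hc'.three_le_length; omega
  obtain ⟨w, hadj, q, hq⟩ := SimpleGraph.Walk.not_nil_iff.mp hne
  have hqnd : q.support.Nodup := by
    have := hc'.2
    rw [hq, SimpleGraph.Walk.support_cons] at this
    exact this
  have key : ∀ x y : V, x ∈ Y → y ∈ Y → G.Adj x y →
      (q.support.idxOf y = q.support.idxOf x + 1 ∨
       q.support.idxOf x = q.support.idxOf y + 1) := by
    intro x y hx hy hadjxy
    have hsub : c.toSubgraph.Adj x y := hc.2 x y (hY x hx) (hY y hy) hadjxy
    have hedge : s(x, y) ∈ c.edges := by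
      rw [← SimpleGraph.Walk.mem_edges_toSubgraph]
      exact hsub
    have hedge' : s(x, y) ∈ (c.rotate v hv).edges :=
      (SimpleGraph.Walk.rotate_edges c v hv).mem_iff.mpr hedge
    rw [hq, SimpleGraph.Walk.edges_cons, List.mem_cons] at hedge'
    rcases hedge' with heq | hmem
    · rw [Sym2.eq_iff] at heq
      rcases heq with ⟨rfl, rfl⟩ | ⟨rfl, rfl⟩
      · exact absurd hx hvY
      · exact absurd hy hvY
    · exact indexOf_edges q hqnd x y hmem
  have C : (G.induce Y).Coloring (ZMod 2) :=
    SimpleGraph.Coloring.mk (fun x => (q.support.idxOf x.val : ZMod 2)) (by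
      rintro ⟨x, hx⟩ ⟨y, hy⟩ hadjxy
      have : G.Adj x y := hadjxy
      show (q.support.idxOf x : ZMod 2) ≠ (q.support.idxOf y : ZMod 2)
      rcases key x y hx hy this with h' | h'
      · rw [h']; push_cast
        intro hcon
        exact (by decide : (1 : ZMod 2) ≠ 0) (by linear_combination -hcon)
      · rw [h']; push_cast
        intro hcon
        exact (by decide : (1 : ZMod 2) ≠ 0) (by linear_combination hcon))
  have := C.colorable
  rwa [ZMod.card 2] at this

private lemma sunflower_lemma {α : Type*} [DecidableEq α] :
    ∀ (s k : ℕ), 0 < k → ∀ (F : Finset (Finset α)),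
      (∀ A ∈ F, A.card = s) → Nat.factorial s * (k - 1) ^ s < F.card →
      ∃ 𝒮 ⊆ F, 𝒮.card = k ∧ ∃ Y : Finset α,
        (∀ A ∈ 𝒮, Y ⊂ A) ∧ ∀ A ∈ 𝒮, ∀ B ∈ 𝒮, A ≠ B → A ∩ B = Y := by
  intro s
  induction s with
  | zero =>
    intro k hk F hcardF hlt
    exfalso
    simp [Nat.factorial] at hlt
    have hsub : F ⊆ {∅} := by
      intro A hA
      simp [Finset.card_eq_zero.mp (hcardF A hA)]
    have := Finset.card_le_card hsub
    simp at this; omega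
  | succ s ih =>
    intro k hk F hcardF hlt
    classical
    set cand := F.powerset.filter
      (fun 𝒜 => ∀ A ∈ 𝒜, ∀ B ∈ 𝒜, A ≠ B → A ∩ B = ∅) with hcand
    have hcne : cand.Nonempty := ⟨∅, by simp [hcand]⟩
    obtain ⟨𝒜, h𝒜, hmax⟩ := Finset.exists_max_image cand Finset.card hcne
    rw [hcand, Finset.mem_filter, Finset.mem_powerset] at h𝒜
    obtain ⟨h𝒜F, h𝒜disj⟩ := h𝒜
    have hnonempty : ∀ A ∈ F, A.Nonempty := by
      intro A hA
      rw [← Finset.card_pos, hcardF A hA]; omega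
    by_cases hkle : k ≤ 𝒜.card
    · obtain ⟨𝒮, h𝒮sub, h𝒮card⟩ := Finset.exists_subset_card_eq hkle
      refine ⟨𝒮, h𝒮sub.trans h𝒜F, h𝒮card, ∅, ?_, ?_⟩
      · intro A hA
        exact (Finset.empty_ssubset).mpr (hnonempty A ((h𝒮sub.trans h𝒜F) hA))
      · intro A hA B hB hAB
        exact h𝒜disj A (h𝒮sub hA) B (h𝒮sub hB) hAB
    · push_neg at hkle
      set U := 𝒜.biUnion id with hU
      have hUcard : U.card ≤ (k - 1) * (s + 1) := by
        calc U.card ≤ 𝒜.card * (s + 1) := by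
              apply Finset.card_biUnion_le_card_mul
              intro A hA
              simp only [id]
              rw [hcardF A (h𝒜F hA)]
          _ ≤ (k - 1) * (s + 1) := by
              apply Nat.mul_le_mul_right; omega
      have hhit : ∀ A ∈ F, ∃ x ∈ U, x ∈ A := by
        intro A hA
        by_contra hno
        push_neg at hno
        have hAnot : A ∉ 𝒜 := by
          intro h
          obtain ⟨y, hy⟩ := hnonempty A hA
          exact hno y (Finset.mem_biUnion.mpr ⟨A, h, hy⟩) hy
        have hins : insert A 𝒜 ∈ cand := by
          rw [hcand, Finset.mem_filter, Finset.mem_powerset]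
          constructor
          · exact Finset.insert_subset hA h𝒜F
          · intro B1 hB1 B2 hB2 hne12
            rcases Finset.mem_insert.mp hB1 with rfl | hB1'
            · rcases Finset.mem_insert.mp hB2 with rfl | hB2'
              · exact absurd rfl hne12
              · apply Finset.eq_empty_of_forall_notMem
                intro y hy
                exact hno y (Finset.mem_biUnion.mpr ⟨B2, hB2', (Finset.mem_inter.mp hy).2⟩)
                  (Finset.mem_inter.mp hy).1
            · rcases Finset.mem_insert.mp hB2 with rfl | hB2'
              · apply Finset.eq_empty_of_forall_notMem
                intro y hy
                exact hno y (Finset.mem_biUnion.mpr ⟨B1, hB1', (Finset.mem_inter.mp hy).1⟩)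
                  (Finset.mem_inter.mp hy).2
              · exact h𝒜disj B1 hB1' B2 hB2' hne12
        have := hmax _ hins
        rw [Finset.card_insert_of_notMem hAnot] at this
        omega
      obtain ⟨x, hxU, hx⟩ : ∃ x ∈ U,
          Nat.factorial s * (k - 1) ^ s < (F.filter (fun A => x ∈ A)).card := by
        by_contra hno
        push_neg at hno
        have hsubb : F ⊆ U.biUnion (fun x => F.filter (fun A => x ∈ A)) := by
          intro A hA
          obtain ⟨x, hxU, hxA⟩ := hhit A hA
          exact Finset.mem_biUnion.mpr ⟨x, hxU, Finset.mem_filter.mpr ⟨hA, hxA⟩⟩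
        have h1 : F.card ≤ U.card * (Nat.factorial s * (k - 1) ^ s) := by
          calc F.card ≤ (U.biUnion (fun x => F.filter (fun A => x ∈ A))).card :=
                Finset.card_le_card hsubb
            _ ≤ U.card * (Nat.factorial s * (k - 1) ^ s) :=
                Finset.card_biUnion_le_card_mul _ _ _ (fun x hx => hno x hx)
        have h2 : U.card * (Nat.factorial s * (k - 1) ^ s) ≤
            Nat.factorial (s + 1) * (k - 1) ^ (s + 1) := by
          calc U.card * (Nat.factorial s * (k - 1) ^ s)
              ≤ ((k - 1) * (s + 1)) * (Nat.factorial s * (k - 1) ^ s) :=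
                Nat.mul_le_mul_right _ hUcard
            _ = Nat.factorial (s + 1) * (k - 1) ^ (s + 1) := by
                rw [Nat.factorial_succ, pow_succ]; ring
        omega
      set Fx := F.filter (fun A => x ∈ A) with hFx
      have hxmem : ∀ A ∈ Fx, x ∈ A := fun A hA => (Finset.mem_filter.mp hA).2
      set F' := Fx.image (fun A => A.erase x) with hF'
      have hinj1 : Set.InjOn (fun A : Finset α => A.erase x) ↑Fx := by
        intro A hA B hB hAB
        rw [← Finset.insert_erase (hxmem A hA), ← Finset.insert_erase (hxmem B hB)]
        simp only at hAB
        rw [hAB]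
      have hF'card : F'.card = Fx.card := Finset.card_image_of_injOn hinj1
      have hF's : ∀ B ∈ F', B.card = s := by
        intro B hB
        obtain ⟨A, hA, rfl⟩ := Finset.mem_image.mp hB
        rw [Finset.card_erase_of_mem (hxmem A hA), hcardF A (Finset.mem_filter.mp hA).1]
        omega
      have hxnot : ∀ B ∈ F', x ∉ B := by
        intro B hB
        obtain ⟨A, hA, rfl⟩ := Finset.mem_image.mp hB
        exact Finset.notMem_erase x A
      obtain ⟨𝒮', h𝒮'sub, h𝒮'card, Y', hY'ss, hY'int⟩ :=
        ih k hk F' hF's (by rw [hF'card]; exact hx)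
      have hxnot' : ∀ B ∈ 𝒮', x ∉ B := fun B hB => hxnot B (h𝒮'sub hB)
      have hinj2 : Set.InjOn (fun A : Finset α => insert x A) ↑𝒮' := by
        intro A hA B hB hAB
        simp only at hAB
        rw [← Finset.erase_insert (hxnot' A hA), hAB, Finset.erase_insert (hxnot' B hB)]
      refine ⟨𝒮'.image (fun A => insert x A), ?_, ?_, insert x Y', ?_, ?_⟩
      · intro A hA
        obtain ⟨A', hA', rfl⟩ := Finset.mem_image.mp hA
        obtain ⟨B, hB, rfl⟩ := Finset.mem_image.mp (h𝒮'sub hA')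
        rw [Finset.insert_erase (hxmem B hB)]
        exact (Finset.filter_subset _ _) hB
      · rw [Finset.card_image_of_injOn hinj2, h𝒮'card]
      · intro A hA
        obtain ⟨A', hA', rfl⟩ := Finset.mem_image.mp hA
        have hss := hY'ss A' hA'
        rw [Finset.ssubset_iff_of_subset (Finset.insert_subset_insert x hss.subset)]
        obtain ⟨t, htA, htY⟩ := Finset.exists_of_ssubset hss
        refine ⟨t, Finset.mem_insert_of_mem htA, ?_⟩
        intro hcon
        rcases Finset.mem_insert.mp hcon with rfl | h'
        · exact hxnot' A' hA' htA
        · exact htY h'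
      · intro A hA B hB hAB
        obtain ⟨A', hA', rfl⟩ := Finset.mem_image.mp hA
        obtain ⟨B', hB', rfl⟩ := Finset.mem_image.mp hB
        have hAB' : A' ≠ B' := fun h => hAB (by rw [h])
        rw [Finset.insert_inter_of_mem (Finset.mem_insert_self x B'),
          Finset.inter_insert_of_notMem (hxnot' A' hA'),
          hY'int A' hA' B' hB' hAB']

/-- `Z` is a minimal odd cycle transversal. -/
def IsMinOCT {V : Type*} (G : SimpleGraph V) (Z : Set V) : Prop :=
  IsOCT G Z ∧ ∀ Z' ⊂ Z, ¬ IsOCT G Z'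

private lemma exists_minOCT_subset {V : Type*} [Fintype V] {G : SimpleGraph V} :
    ∀ (n : ℕ) (Z0 : Set V), Z0.ncard ≤ n → IsOCT G Z0 → ∃ Z, Z ⊆ Z0 ∧ IsMinOCT G Z := by
  intro n
  induction n with
  | zero =>
    intro Z0 hn h
    have hZ0 : Z0 = ∅ := by
      rw [← Set.ncard_eq_zero (Set.toFinite Z0)]; omega
    subst hZ0
    exact ⟨∅, subset_rfl, h, fun Z' hZ' => absurd (Set.subset_empty_iff.mp hZ'.subset) hZ'.ne⟩
  | succ n ih =>
    intro Z0 hn h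
    by_cases hmin : ∀ Z' ⊂ Z0, ¬ IsOCT G Z'
    · exact ⟨Z0, subset_rfl, h, hmin⟩
    · push_neg at hmin
      obtain ⟨Z', hss, hZ'⟩ := hmin
      have hlt : Z'.ncard < Z0.ncard := Set.ncard_lt_ncard hss (Set.toFinite Z0)
      obtain ⟨Z, hsub, hmin'⟩ := ih Z' (by omega) hZ'
      exact ⟨Z, hsub.trans hss.subset, hmin'⟩

theorem stmt11 {V : Type*} [Fintype V] [DecidableEq V] (G : SimpleGraph V) (d k : ℕ)
    (hd : 0 < d) (hk : 0 < k)
    (𝒞 : Finset (Finset V))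
    (hmem : ∀ C ∈ 𝒞, ∃ (u : V) (c : G.Walk u u), IsInducedCycle G c ∧ Odd c.length ∧
      c.length ≤ d ∧ c.support.toFinset = C)
    (hcard : d * Nat.factorial d * (k - 1) ^ d < 𝒞.card) :
    ∃ Z : Set V, IsMinOCT G Z ∧ k ≤ Z.ncard := by
  classical
  have hC1 : ∀ C ∈ 𝒞, C.card ∈ Finset.Icc 1 d := by
    intro C hC
    obtain ⟨u, c, hic, hodd, hlen, hsupp⟩ := hmem C hC
    rw [← hsupp, cycle_support_card hic.1, Finset.mem_Icc]
    exact ⟨hodd.pos, hlen⟩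
  obtain ⟨s, hs, hsgt⟩ : ∃ s ∈ Finset.Icc 1 d,
      Nat.factorial d * (k - 1) ^ d < (𝒞.filter (fun C => C.card = s)).card := by
    by_contra hno
    push_neg at hno
    have hsubb : 𝒞 ⊆ (Finset.Icc 1 d).biUnion (fun s => 𝒞.filter (fun C => C.card = s)) := by
      intro C hC
      exact Finset.mem_biUnion.mpr ⟨C.card, hC1 C hC, Finset.mem_filter.mpr ⟨hC, rfl⟩⟩
    have h1 := Finset.card_le_card hsubb
    have h2 := Finset.card_biUnion_le_card_mul (Finset.Icc 1 d) _
      (Nat.factorial d * (k - 1) ^ d) (fun s hs => hno s hs)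
    rw [Nat.card_Icc] at h2
    have h3 : d + 1 - 1 = d := by omega
    rw [h3] at h2
    rw [mul_assoc] at hcard
    omega
  set F := 𝒞.filter (fun C => C.card = s) with hFdef
  have hF : ∀ A ∈ F, A.card = s := fun A hA => (Finset.mem_filter.mp hA).2
  have hs1 := Finset.mem_Icc.mp hs
  have hle : Nat.factorial s * (k - 1) ^ s ≤ Nat.factorial d * (k - 1) ^ d := by
    apply Nat.mul_le_mul (Nat.factorial_le hs1.2)
    rcases Nat.eq_zero_or_pos (k - 1) with h0 | hpos
    · rw [h0, Nat.zero_pow (by omega), Nat.zero_pow (by omega)]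
    · exact Nat.pow_le_pow_right hpos hs1.2
  obtain ⟨𝒮, h𝒮F, h𝒮card, Y, hYss, hYint⟩ :=
    sunflower_lemma s k hk F hF (lt_of_le_of_lt hle hsgt)
  have h𝒮𝒞 : 𝒮 ⊆ 𝒞 := h𝒮F.trans (Finset.filter_subset _ _)
  have h𝒮ne : 𝒮.Nonempty := by rw [← Finset.card_pos, h𝒮card]; exact hk
  obtain ⟨A0, hA0⟩ := h𝒮ne
  obtain ⟨u0, c0, hic0, hodd0, hlen0, hsupp0⟩ := hmem A0 (h𝒮𝒞 hA0)
  obtain ⟨v, hvA0, hvY⟩ := Finset.exists_of_ssubset (hYss A0 hA0)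
  have hoct : IsOCT G (↑Y : Set V)ᶜ := by
    unfold IsOCT
    rw [compl_compl]
    apply induced_cycle_colorable hic0 (v := v)
    · rw [← List.mem_toFinset, hsupp0]; exact hvA0
    · simpa using hvY
    · intro y hy
      rw [← List.mem_toFinset, hsupp0]
      exact (hYss A0 hA0).subset (by simpa using hy)
  obtain ⟨Z, hZsub, hZmin⟩ := exists_minOCT_subset ((↑Y : Set V)ᶜ).ncard _ le_rfl hoct
  refine ⟨Z, hZmin, ?_⟩
  have hmeets : ∀ A ∈ 𝒮, ∃ x, x ∈ A ∧ x ∈ Z := by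
    intro A hA
    by_contra hno
    push_neg at hno
    obtain ⟨u, c, hic, hodd, hlen, hsupp⟩ := hmem A (h𝒮𝒞 hA)
    exact oct_avoid_odd_cycle hZmin.1 c hodd
      (fun x hx hxZ => hno x (by rw [← hsupp]; exact List.mem_toFinset.mpr hx) hxZ)
  have hVne : Nonempty V := ⟨v⟩
  set f : Finset V → V := fun A =>
    if h : ∃ x, x ∈ A ∧ x ∈ Z then h.choose else Classical.arbitrary V with hfdef
  have hfZ : ∀ A ∈ 𝒮, f A ∈ Z ∧ f A ∈ A := by
    intro A hA
    have h := hmeets A hA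
    simp only [hfdef, dif_pos h]
    exact ⟨h.choose_spec.2, h.choose_spec.1⟩
  have hZfin : Z.Finite := Set.toFinite Z
  have hinj : Set.InjOn f ↑𝒮 := by
    intro A hA B hB hAB
    by_contra hne
    have h1 := hfZ A hA
    have h2 := hfZ B hB
    have hmemAB : f A ∈ A ∩ B := Finset.mem_inter.mpr ⟨h1.2, by rw [hAB]; exact h2.2⟩
    rw [hYint A hA B hB hne] at hmemAB
    exact (hZsub h1.1) (by simpa using hmemAB)
  have hcle : 𝒮.card ≤ hZfin.toFinset.card := by
    apply Finset.card_le_card_of_injOn f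
    · intro A hA
      rw [Finset.mem_coe, Set.Finite.mem_toFinset]
      exact (hfZ A hA).1
    · exact fun A hA B hB => hinj hA hB
  rw [Set.ncard_eq_toFinset_card Z hZfin]
  omega
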